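/- arXiv:1902.06845 — 5 statements merged into one kernel-verified Lean document; each statement's English description precedes it below -/
import Mathlib

section
/- Let x, α be real numbers with 0 < x ≤ π/2, 0 ≤ α, and α + x/2 < π/2. Then cot²(α + x/2) ≥ cot²(x)·(1 + sec²(α + x/2)) if and only if sin²(x/2) ≥ sin(x+α)·sin(α). -/
open Real

/-- For `0 < x ≤ π/2`, `0 ≤ α`, `α + x/2 < π/2`:
`cot²(α + x/2) ≥ cot²(x)·(1 + sec²(α + x/2))` iff `sin²(x/2) ≥ sin(x+α)·sin α`,
with `cot y = cos y / sin y` and `sec y = 1 / cos y`. -/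
theorem central_point_iff_connected_wedge (x α : ℝ)
    (hx : 0 < x) (hx' : x ≤ π / 2) (hα : 0 ≤ α) (hθ : α + x / 2 < π / 2) :
    (cos (α + x / 2) / sin (α + x / 2)) ^ 2 ≥
      (cos x / sin x) ^ 2 * (1 + (1 / cos (α + x / 2)) ^ 2) ↔
    sin (x / 2) ^ 2 ≥ sin (x + α) * sin α := by
  have hpi := Real.pi_pos
  have hs : 0 < sin (α + x / 2) :=
    Real.sin_pos_of_pos_of_lt_pi (by linarith) (by linarith)
  have hc : 0 < cos (α + x / 2) :=
    Real.cos_pos_of_mem_Ioo ⟨by linarith, hθ⟩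
  have hsx : 0 < sin x := Real.sin_pos_of_pos_of_lt_pi hx (by linarith)
  have hcx : 0 ≤ cos x := Real.cos_nonneg_of_mem_Icc ⟨by linarith, hx'⟩
  set θ := α + x / 2 with hθdef
  clear_value θ
  have p1 := Real.sin_sq_add_cos_sq θ
  have p2 := Real.sin_sq_add_cos_sq (x / 2)
  have p3 := Real.sin_sq_add_cos_sq x
  -- product identity
  have hprod : sin (x + α) * sin α = sin θ ^ 2 - sin (x / 2) ^ 2 := by
    have e1 : x + α = θ + x / 2 := by rw [hθdef]; ring
    have e2 : α = θ - x / 2 := by rw [hθdef]; ring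
    rw [e1, e2, Real.sin_add, Real.sin_sub]
    nlinarith [p1, p2]
  -- half angle: cos x = 1 - 2 sin(x/2)^2
  have hhalf : cos x = 1 - 2 * sin (x / 2) ^ 2 := by
    have h := Real.cos_two_mul' (x / 2)
    rw [show 2 * (x / 2) = x by ring] at h
    linarith [p2, h]
  have hcθ2 : 0 < cos θ ^ 2 := pow_pos hc 2
  -- reduce both sides to `cos x ≤ cos θ ^ 2`
  have key1 : ((cos x / sin x) ^ 2 * (1 + (1 / cos θ) ^ 2) ≤ (cos θ / sin θ) ^ 2)
      ↔ cos x ≤ cos θ ^ 2 := by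
    rw [show (cos x / sin x) ^ 2 * (1 + (1 / cos θ) ^ 2)
        = (cos x ^ 2 * (cos θ ^ 2 + 1)) / (sin x ^ 2 * cos θ ^ 2) by
      field_simp]
    rw [div_pow, div_le_div_iff₀ (by positivity) (by positivity)]
    have hcu : 0 < cos x + cos θ ^ 2 := add_pos_of_nonneg_of_pos hcx hcθ2
    have e1 : sin θ ^ 2 = 1 - cos θ ^ 2 := by linarith
    have e2 : sin x ^ 2 = 1 - cos x ^ 2 := by linarith
    rw [e1, e2]
    constructor
    · intro h
      have h2 : cos x ^ 2 ≤ (cos θ ^ 2) ^ 2 := by nlinarith [h]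
      nlinarith [h2, hcu]
    · intro h
      have h2 : cos x ^ 2 ≤ (cos θ ^ 2) ^ 2 := pow_le_pow_left₀ hcx h 2
      nlinarith [h2]
  have key2 : (sin (x + α) * sin α ≤ sin (x / 2) ^ 2) ↔ cos x ≤ cos θ ^ 2 := by
    rw [hprod]
    constructor
    · intro h; linarith [p1, hhalf]
    · intro h; linarith [p1, hhalf]
  rw [ge_iff_le, ge_iff_le, key1, key2]
end

section
/- Let ℓ be a real number with −1 < ℓ < 1 and ℓ ≠ 0, and let t₀, φ₀ be real constants. Define for λ ∈ ℝ: t(λ) = t₀ + π/2 + arctan(λ(1−ℓ²)), φ(λ) = φ₀ + π/2 + arctan(λ(1−ℓ²)/ℓ), and u(λ) = √(λ²(1−ℓ²) + 1/(1−ℓ²)). Then for every λ ∈ ℝ: −u(λ)²·(t′(λ))² + (u′(λ))²/(u(λ)² − 1) + (u(λ)² − 1)·(φ′(λ))² = 0, where ′ denotes the derivative with respect to λ. -/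
set_option maxHeartbeats 1000000


open Real

/-- The curves `t(λ) = t₀ + π/2 + arctan(λ(1−ℓ²))`,
`φ(λ) = φ₀ + π/2 + arctan(λ(1−ℓ²)/ℓ)`, `u(λ) = √(λ²(1−ℓ²) + 1/(1−ℓ²))`
(with `−1 < ℓ < 1`, `ℓ ≠ 0`) are null for the AdS₂₊₁ metric:
`−u²·t′² + u′²/(u² − 1) + (u² − 1)·φ′² = 0`. -/
theorem null_geodesic_AdS3 (l t₀ φ₀ : ℝ) (hl1 : -1 < l) (hl2 : l < 1) (hl0 : l ≠ 0)
    (t φ u : ℝ → ℝ)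
    (ht : ∀ lam, t lam = t₀ + π / 2 + arctan (lam * (1 - l ^ 2)))
    (hφ : ∀ lam, φ lam = φ₀ + π / 2 + arctan (lam * (1 - l ^ 2) / l))
    (hu : ∀ lam, u lam = Real.sqrt (lam ^ 2 * (1 - l ^ 2) + 1 / (1 - l ^ 2))) :
    ∀ lam : ℝ,
      -(u lam) ^ 2 * (deriv t lam) ^ 2 + (deriv u lam) ^ 2 / ((u lam) ^ 2 - 1)
        + ((u lam) ^ 2 - 1) * (deriv φ lam) ^ 2 = 0 := by
  have ht' : t = fun x => t₀ + π / 2 + arctan (x * (1 - l ^ 2)) := funext ht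
  have hφ' : φ = fun x => φ₀ + π / 2 + arctan (x * (1 - l ^ 2) / l) := funext hφ
  have hu' : u = fun x => Real.sqrt (x ^ 2 * (1 - l ^ 2) + 1 / (1 - l ^ 2)) := funext hu
  subst ht' hφ' hu'
  intro lam
  set a : ℝ := 1 - l ^ 2 with ha
  have ha0 : 0 < a := by nlinarith
  have hl2' : 0 < l ^ 2 := by positivity
  have hinner : 0 < lam ^ 2 * a + 1 / a := by positivity
  -- derivative of t
  have Ht : HasDerivAt (fun x : ℝ => t₀ + π / 2 + arctan (x * a))
      (1 / (1 + (lam * a) ^ 2) * a) lam := by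
    have h1 : HasDerivAt (fun x : ℝ => x * a) a lam := by
      simpa using (hasDerivAt_id lam).mul_const a
    exact ((Real.hasDerivAt_arctan (lam * a)).comp lam h1).const_add _
  -- derivative of φ
  have Hφ : HasDerivAt (fun x : ℝ => φ₀ + π / 2 + arctan (x * a / l))
      (1 / (1 + (lam * a / l) ^ 2) * (a / l)) lam := by
    have h1 : HasDerivAt (fun x : ℝ => x * a / l) (a / l) lam := by
      simpa using ((hasDerivAt_id lam).mul_const a).div_const l
    exact ((Real.hasDerivAt_arctan (lam * a / l)).comp lam h1).const_add _
  -- derivative of u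
  have Hu : HasDerivAt (fun x : ℝ => Real.sqrt (x ^ 2 * a + 1 / a))
      ((2 * lam * a) / (2 * Real.sqrt (lam ^ 2 * a + 1 / a))) lam := by
    have h1 : HasDerivAt (fun x : ℝ => x ^ 2 * a + 1 / a) (2 * lam * a) lam := by
      have := ((hasDerivAt_pow 2 lam).mul_const a).add_const (1 / a)
      simpa using this.congr_deriv (by ring)
    exact h1.sqrt hinner.ne'
  rw [Ht.deriv, Hφ.deriv, Hu.deriv]
  have hU : Real.sqrt (lam ^ 2 * a + 1 / a) ^ 2 = lam ^ 2 * a + 1 / a :=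
    Real.sq_sqrt hinner.le
  have hUpos : 0 < Real.sqrt (lam ^ 2 * a + 1 / a) := Real.sqrt_pos.mpr hinner
  set U : ℝ := Real.sqrt (lam ^ 2 * a + 1 / a) with hUdef
  have hd1 : (1 : ℝ) + (lam * a) ^ 2 ≠ 0 := by positivity
  have hd2 : (1 : ℝ) + (lam * a / l) ^ 2 ≠ 0 := by positivity
  have hd3 : lam ^ 2 * a + 1 / a - 1 ≠ 0 := by
    have ha1 : a < 1 := by rw [ha]; nlinarith
    have h11 : 1 < 1 / a := one_lt_one_div ha0 ha1
    have h2 : 0 ≤ lam ^ 2 * a := by positivity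
    nlinarith
  have hS : (0:ℝ) < lam ^ 2 * a + 1 / a := hinner
  have hterm1 : 1 / (1 + (lam * a) ^ 2) * a = 1 / (lam ^ 2 * a + 1 / a) := by
    rw [div_mul_eq_mul_div, one_mul, div_eq_div_iff hd1 hS.ne']
    field_simp
    ring
  have hterm2 : 1 / (1 + (lam * a / l) ^ 2) * (a / l) = l / (lam ^ 2 * a + 1 / a - 1) := by
    rw [div_mul_eq_mul_div, one_mul, div_div, div_eq_div_iff (by positivity) hd3, ha]
    field_simp [show (1:ℝ) - l ^ 2 ≠ 0 by nlinarith]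
    ring
  have hterm3 : (2 * lam * a / (2 * U)) ^ 2 = lam ^ 2 * a ^ 2 / (lam ^ 2 * a + 1 / a) := by
    rw [div_pow, ← hU]
    ring_nf
  rw [hterm1, hterm2, hterm3, hU]
  have hsub : lam ^ 2 * a + 1 / a - 1 = (lam ^ 2 * a ^ 2 + l ^ 2) / a := by
    rw [ha]; field_simp [show (1:ℝ) - l ^ 2 ≠ 0 by nlinarith]; ring
  rw [hsub] at hd3 ⊢
  rw [ha] at hd3 hS ⊢
  have h1 : lam ^ 2 * (1 - l ^ 2) ^ 2 + l ^ 2 ≠ 0 := by positivity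
  have h2 : (1:ℝ) - l ^ 2 ≠ 0 := by nlinarith
  field_simp
  ring
end

section
/- Let x, α be real with 0 < x, 0 < α, and θ := α + x/2 < π/2. For ℓ ∈ (−1,1) define u(ℓ) = √((1 + ℓ²·cot²θ)/(1 − ℓ²)), F(ℓ) = 3x/2 + α − (π/2 − arctan(ℓ·cot θ)) − (π/2 − arccos(1/u(ℓ))), and G(ℓ) = π − α + x/2 − (π/2 − arctan(ℓ·cot θ)) − (π/2 + arccos(1/u(ℓ))). Then for every ℓ ∈ (−1,1): F(ℓ) = G(ℓ) if and only if ℓ² = cos²θ/(1 + cos²θ), i.e. ℓ = ±1/√(1 + sec²θ). -/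
open Real

/-- The time-budget functions `F`, `G` of Appendix C satisfy, for `ℓ ∈ (−1,1)`,
`F(ℓ) = G(ℓ)` iff `ℓ² = cos²θ/(1 + cos²θ)` (i.e. `ℓ = ±1/√(1 + sec²θ)`),
where `θ = α + x/2`. -/
theorem crossing_point_F_eq_G (x α θ : ℝ) (hx : 0 < x) (hα : 0 < α)
    (hθ : θ = α + x / 2) (hθ2 : θ < π / 2)
    (u F G : ℝ → ℝ)
    (hu : ∀ l, u l = Real.sqrt ((1 + l ^ 2 * (cos θ / sin θ) ^ 2) / (1 - l ^ 2)))
    (hF : ∀ l, F l = 3 * x / 2 + α - (π / 2 - arctan (l * (cos θ / sin θ)))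
        - (π / 2 - arccos (1 / u l)))
    (hG : ∀ l, G l = π - α + x / 2 - (π / 2 - arctan (l * (cos θ / sin θ)))
        - (π / 2 + arccos (1 / u l))) :
    ∀ l : ℝ, -1 < l → l < 1 →
      (F l = G l ↔ l ^ 2 = cos θ ^ 2 / (1 + cos θ ^ 2)) := by
  intro l hl1 hl2
  have hθ0 : 0 < θ := by rw [hθ]; linarith
  have hπ : 0 < π := pi_pos
  have hs : 0 < sin θ := sin_pos_of_pos_of_lt_pi hθ0 (by linarith)
  have hc : 0 < cos θ := cos_pos_of_mem_Ioo ⟨by linarith, hθ2⟩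
  have hden : 0 < 1 - l ^ 2 := by nlinarith
  have hnum : 0 < 1 + l ^ 2 * (cos θ / sin θ) ^ 2 := by positivity
  have hX : 0 < (1 + l ^ 2 * (cos θ / sin θ) ^ 2) / (1 - l ^ 2) := div_pos hnum hden
  have hu1 : 1 ≤ u l := by
    rw [hu l]
    calc (1 : ℝ) = Real.sqrt 1 := Real.sqrt_one.symm
      _ ≤ _ := Real.sqrt_le_sqrt (by
          rw [le_div_iff₀ hden]
          nlinarith [sq_nonneg (l * (cos θ / sin θ))])
  have hu0 : 0 < u l := lt_of_lt_of_le one_pos hu1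
  have hinv0 : 0 < 1 / u l := by positivity
  have hinv1 : 1 / u l ≤ 1 := by rw [div_le_one hu0]; exact hu1
  have key : F l = G l ↔ arccos (1 / u l) = π / 2 - θ := by
    rw [hF l, hG l]
    constructor <;> intro h <;> [linarith; linarith]
  rw [key]
  have key2 : arccos (1 / u l) = π / 2 - θ ↔ 1 / u l = sin θ := by
    constructor
    · intro h
      have := congrArg Real.cos h
      rwa [Real.cos_arccos (by linarith) hinv1, Real.cos_pi_div_two_sub] at this
    · intro h
      rw [h, ← Real.cos_pi_div_two_sub, Real.arccos_cos (by linarith) (by linarith)]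
  rw [key2]
  have husq : (u l) ^ 2 = (1 + l ^ 2 * (cos θ / sin θ) ^ 2) / (1 - l ^ 2) := by
    rw [hu l, Real.sq_sqrt hX.le]
  have hpyth := sin_sq_add_cos_sq θ
  constructor
  · intro h
    have huval : u l = 1 / sin θ := by
      rw [← h]; field_simp
    have h2 : (1 + l ^ 2 * (cos θ / sin θ) ^ 2) / (1 - l ^ 2) = 1 / sin θ ^ 2 := by
      rw [← husq, huval]; ring
    rw [div_eq_div_iff hden.ne' (by positivity : (sin θ ^ 2 : ℝ) ≠ 0)] at h2
    rw [eq_div_iff (by positivity : (1 + cos θ ^ 2 : ℝ) ≠ 0)]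
    field_simp at h2
    nlinarith [h2, hpyth, mul_pos hs hs]
  · intro h
    have h' : l ^ 2 * (1 + cos θ ^ 2) = cos θ ^ 2 := by
      rw [h]; field_simp
    have h2 : (1 + l ^ 2 * (cos θ / sin θ) ^ 2) / (1 - l ^ 2) = 1 / sin θ ^ 2 := by
      rw [div_eq_div_iff hden.ne' (by positivity : (sin θ ^ 2 : ℝ) ≠ 0)]
      field_simp
      nlinarith [h', hpyth]
    have huval : u l = 1 / sin θ := by
      rw [hu l, h2, one_div, Real.sqrt_inv, Real.sqrt_sq hs.le, one_div]
    rw [huval]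
    field_simp
end

section
/- Let x, α be real with 0 < x ≤ π/2, 0 < α, and θ := α + x/2 < π/2. For ℓ ∈ (−1,1) define u(ℓ) = √((1 + ℓ²·cot²θ)/(1 − ℓ²)) and F(ℓ) = 3x/2 + α − (π/2 − arctan(ℓ·cot θ)) − (π/2 − arccos(1/u(ℓ))). Set ℓ* = 1/√(1 + sec²θ). Then F(ℓ*) ≥ 0 if and only if cot²θ ≥ cot²(x)·(1 + sec²θ). -/
open Real

/-- Substituting `ℓ* = 1/√(1 + sec²θ)` into the time-budget function `F`:
`F(ℓ*) ≥ 0` iff `cot²θ ≥ cot²(x)·(1 + sec²θ)`, where `θ = α + x/2`. -/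
theorem F_at_crossing_nonneg_iff (x α θ : ℝ) (hx : 0 < x) (hx' : x ≤ π / 2) (hα : 0 < α)
    (hθ : θ = α + x / 2) (hθ2 : θ < π / 2)
    (u F : ℝ → ℝ)
    (hu : ∀ l, u l = Real.sqrt ((1 + l ^ 2 * (cos θ / sin θ) ^ 2) / (1 - l ^ 2)))
    (hF : ∀ l, F l = 3 * x / 2 + α - (π / 2 - arctan (l * (cos θ / sin θ)))
        - (π / 2 - arccos (1 / u l)))
    (lstar : ℝ) (hlstar : lstar = 1 / Real.sqrt (1 + (1 / cos θ) ^ 2)) :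
    F lstar ≥ 0 ↔
      (cos θ / sin θ) ^ 2 ≥ (cos x / sin x) ^ 2 * (1 + (1 / cos θ) ^ 2) := by
  have hθpos : 0 < θ := by rw [hθ]; linarith
  have hcos : 0 < cos θ := cos_pos_of_mem_Ioo ⟨by linarith [pi_pos], hθ2⟩
  have hsin : 0 < sin θ := sin_pos_of_pos_of_lt_pi hθpos (by linarith [pi_pos])
  set c : ℝ := cos θ / sin θ with hc
  set s2 : ℝ := 1 + (1 / cos θ) ^ 2 with hs2def
  have hs2 : 0 < s2 := by positivity
  have hls : lstar ^ 2 = 1 / s2 := by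
    rw [hlstar, div_pow, one_pow, sq_sqrt hs2.le]
  have hlpos : 0 < lstar := by
    rw [hlstar]; positivity
  -- value of u at lstar
  have hinner : (1 + lstar ^ 2 * c ^ 2) / (1 - lstar ^ 2) = (1 / sin θ) ^ 2 := by
    rw [hls, hc, hs2def]
    have h1 : sin θ ≠ 0 := hsin.ne'
    have h2 : cos θ ≠ 0 := hcos.ne'
    have hpy := sin_sq_add_cos_sq θ
    field_simp
    nlinarith [hpy, sq_nonneg (sin θ * cos θ)]
  have hu1 : u lstar = 1 / sin θ := by
    rw [hu, hinner, sqrt_sq (by positivity)]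
  have harc : arccos (1 / u lstar) = π / 2 - θ := by
    rw [hu1, one_div_one_div, arccos_eq_pi_div_two_sub_arcsin,
      arcsin_sin (by linarith [pi_pos]) hθ2.le]
  have hFval : F lstar = x - π / 2 + arctan (lstar * c) := by
    rw [hF, harc, hθ]; ring
  set t : ℝ := lstar * c with htdef
  have ht : 0 < t := mul_pos hlpos (div_pos hcos hsin)
  have hsinx : 0 < sin x := sin_pos_of_pos_of_lt_pi hx (by linarith [pi_pos])
  have hcosx : 0 ≤ cos x := cos_nonneg_of_mem_Icc ⟨by linarith [pi_pos], hx'⟩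
  have hcotx : 0 ≤ cos x / sin x := div_nonneg hcosx hsinx.le
  -- step 1: F lstar ≥ 0 ↔ tan (π/2 - x) ≤ t
  have hmem1 : π / 2 - x ∈ Set.Ioo (-(π / 2)) (π / 2) := by
    constructor <;> [linarith [pi_pos]; linarith]
  have hmem2 : arctan t ∈ Set.Ioo (-(π / 2)) (π / 2) := arctan_mem_Ioo t
  have step1 : F lstar ≥ 0 ↔ π / 2 - x ≤ arctan t := by
    rw [hFval]; constructor <;> intro h <;> linarith
  have step2 : (π / 2 - x ≤ arctan t) ↔ cos x / sin x ≤ t := by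
    rw [← strictMonoOn_tan.le_iff_le hmem1 hmem2, tan_arctan, tan_pi_div_two_sub,
      tan_eq_sin_div_cos, inv_div]
  have ht2 : t ^ 2 * s2 = c ^ 2 := by
    rw [htdef, mul_pow, hls]
    calc 1 / s2 * c ^ 2 * s2 = c ^ 2 * (s2 / s2) := by ring
      _ = c ^ 2 := by rw [div_self hs2.ne', mul_one]
  have step3 : (cos x / sin x ≤ t) ↔ (cos x / sin x) ^ 2 ≤ t ^ 2 := by
    constructor
    · intro h
      exact pow_le_pow_left₀ hcotx h 2
    · intro h
      nlinarith [ht, hcotx]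
  rw [step1, step2, step3, ge_iff_le, ← ht2]
  exact (mul_le_mul_iff_of_pos_right hs2).symm
end

section
/- Define the causal order on the flat cylinder ℝ × (ℝ/2πℤ), represented on ℝ × ℝ, by (t, φ) ≼ (t', φ') if and only if there exists an integer k with |φ' − φ + 2πk| ≤ t' − t. Let α, x be real with 0 < α, 0 < x, and α + x < π, and set c₁ = (−x/2, −α − x/2), c₂ = (−x/2, α + x/2), r₁ = (α + x, 0), r₂ = (π − α, π). Then there is no point p ∈ ℝ × ℝ with c₁ ≼ p, c₂ ≼ p, p ≼ r₁, and p ≼ r₂. -/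
open Real

/-- The causal order of the flat cylinder `ℝ × (ℝ/2πℤ)`, represented on `ℝ × ℝ`:
`(t, φ) ≼ (t', φ')` iff there is an integer `k` with `|φ' − φ + 2πk| ≤ t' − t`. -/
def CylCausal (p q : ℝ × ℝ) : Prop :=
  ∃ k : ℤ, |q.2 - p.2 + 2 * π * k| ≤ q.1 - p.1

private lemma pi_mul_lt_int (m n : ℤ) (h : π * (m : ℝ) < π * (n : ℝ)) : m < n := by
  have hπ := Real.pi_pos
  have : (m : ℝ) < (n : ℝ) := lt_of_mul_lt_mul_left h hπ.le
  exact_mod_cast this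

/-- For `0 < α`, `0 < x`, `α + x < π`, the boundary central region
`Ĵ⁺(c₁) ∩ Ĵ⁺(c₂) ∩ Ĵ⁻(r₁) ∩ Ĵ⁻(r₂)` of the B₈₄ configuration is empty. -/
theorem boundary_central_region_empty (α x : ℝ) (hα : 0 < α) (hx : 0 < x)
    (hαx : α + x < π) :
    ¬ ∃ p : ℝ × ℝ,
      CylCausal (-x / 2, -α - x / 2) p ∧
      CylCausal (-x / 2, α + x / 2) p ∧
      CylCausal p (α + x, 0) ∧
      CylCausal p (π - α, π) := by
  have hπ := Real.pi_pos
  rintro ⟨⟨t, φ⟩, ⟨k1, h1⟩, ⟨k2, h2⟩, ⟨k3, h3⟩, ⟨k4, h4⟩⟩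
  dsimp only [CylCausal] at h1 h2 h3 h4
  rw [abs_le] at h1 h2 h3 h4
  obtain ⟨h1l, h1r⟩ := h1
  obtain ⟨h2l, h2r⟩ := h2
  obtain ⟨h3l, h3r⟩ := h3
  obtain ⟨h4l, h4r⟩ := h4
  -- basic bounds
  have htx : -(x/2) ≤ t := by linarith
  have hxπ : x < π := by linarith
  -- pin c := k4 - k3 ∈ {-1, 0}
  have hc1 : 2*(k4 - k3)+1 < 3 := pi_mul_lt_int _ _ (by push_cast; linarith)
  have hc2 : -3 < 2*(k4 - k3)+1 := pi_mul_lt_int _ _ (by push_cast; linarith)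
  have hc : k3 = k4 ∨ k3 = k4 + 1 := by omega
  rcases hc with hc | hc <;> subst hc
  · -- here k4 was replaced by k3; ψ := φ - 2π k3: α + t ≤ ψ (h4r), ψ ≤ α + x - t (h3l)
    have ha1 : 2*(k1 + k3)+1 < 2 := pi_mul_lt_int _ _ (by push_cast; linarith)
    have ha2 : -2 < 2*(k1 + k3)+1 := pi_mul_lt_int _ _ (by push_cast; linarith)
    have ha : k1 = -k3 ∨ k1 = -k3 - 1 := by omega
    rcases ha with ha | ha <;> subst ha <;> push_cast at h1l h1r <;> linarith
  · -- here k3 was replaced by k4+1; ψ := φ - 2π(k4+1): ψ ≤ -α - t (h4l), -(α+x-t) ≤ ψ (h3r)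
    push_cast at h3l h3r
    have hb1 : 2*(k2 + k4)+1 < 2 := pi_mul_lt_int _ _ (by push_cast; linarith)
    have hb2 : -2 < 2*(k2 + k4)+1 := pi_mul_lt_int _ _ (by push_cast; linarith)
    have hb : k2 = -k4 - 1 ∨ k2 = -k4 := by omega
    rcases hb with hb | hb <;> subst hb <;> push_cast at h2l h2r <;> linarith
end
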